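/- Consider the closed-loop cable dynamics on [0,L]: functions V, W : [0,∞) × [0,L] → ℝ jointly continuous, with ∂V/∂t, ∂W/∂t, ∂V/∂s, ∂²V/∂s² existing and jointly continuous, satisfying for all t ≥ 0 and s ∈ [0,L]: τ·∂V/∂t = λ²·∂²V/∂s² − V − W + I and τ̃·∂W/∂t = −W + b·g(V), where the control current is I(t,s) = b·g(V(t,s)) + (1−β)·V(t,s) + β·V̄(s) − λ²·V̄''(s) for a twice continuously differentiable reference voltage V̄ : [0,L] → ℝ with V̄'(0) = V̄'(L) = 0, and with Neumann boundary conditions ∂V/∂s(t,0) = ∂V/∂s(t,L) = 0 for all t ≥ 0. Define the Lyapunov functional 𝓛₀(t) = (1/2)·∫₀ᴸ [ τ·(V(t,s) − V̄(s))² + τ̃·(W(t,s) − b·g(V̄(s)))² ] ds and set k = 1/τ̃. If b ≥ 0, τ > 0, τ̃ > 0, λ > 0 and β > (b+1)²/2 + b + k·τ/2, then 𝓛₀(t) ≤ 𝓛₀(0)·exp(−k·t) for all t ≥ 0; in particular the equilibrium (V̄, b·g(V̄)) of the closed-loop neural dynamics is exponentially stable. -/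

import Mathlib

open Set

open MeasureTheory intervalIntegral

open scoped Interval

lemma lyap_aux_ineq (b beta k tau tautil a c d : ℝ) (hb : 0 ≤ b)
    (hktt : k * tautil = 1) (hbeta : (b + 1) ^ 2 / 2 + b + k * tau / 2 < beta)
    (hd2 : d ^ 2 ≤ a ^ 2) :
    2 * a * (-(beta * a) - c + b * d) + 2 * c * (-c + b * d)
      + k * (tau * a ^ 2 + tautil * c ^ 2) ≤ 0 := by
  nlinarith [sq_nonneg (a - d), sq_nonneg (a + d), sq_nonneg (c + b * d - a),
    sq_nonneg (c - b * d + a), mul_nonneg hb (sq_nonneg (a - d)),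
    mul_nonneg hb (sq_nonneg (a + d)),
    mul_nonneg (mul_nonneg hb hb) (sub_nonneg.2 hd2), sq_nonneg a, sq_nonneg c,
    mul_nonneg (sq_nonneg a) (le_of_lt (sub_pos.2 hbeta))]

lemma lyap_decay_aux (k L : ℝ) (hL : 0 < L) (F Ft : ℝ → ℝ → ℝ)
    (hFc : ContinuousOn (fun p : ℝ × ℝ => F p.1 p.2) (Ici 0 ×ˢ Icc 0 L))
    (hFtc : ContinuousOn (fun p : ℝ × ℝ => Ft p.1 p.2) (Ici 0 ×ˢ Icc 0 L))
    (hdiff : ∀ s ∈ Icc (0:ℝ) L, ∀ t ∈ Ioi (0:ℝ), HasDerivAt (fun t' => F t' s) (Ft t s) t)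
    (hD : ∀ t ∈ Ioi (0:ℝ), (∫ s in (0:ℝ)..L, Ft t s) + k * (∫ s in (0:ℝ)..L, F t s) ≤ 0) :
    ∀ t ∈ Ici (0:ℝ), (∫ s in (0:ℝ)..L, F t s) ≤ (∫ s in (0:ℝ)..L, F 0 s) * Real.exp (-k * t) := by
  have hL' : (0:ℝ) ≤ L := hL.le
  have hIoc : Ι (0:ℝ) L = Ioc 0 L := uIoc_of_le hL'
  have hIccIcc : Ι (0:ℝ) L ⊆ Icc 0 L := by rw [hIoc]; exact Ioc_subset_Icc_self
  have hmeas : ∀ (G : ℝ × ℝ → ℝ), ContinuousOn G (Ici 0 ×ˢ Icc 0 L) → ∀ x : ℝ, 0 ≤ x →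
      AEStronglyMeasurable (fun s => G (x, s)) (volume.restrict (Ι (0:ℝ) L)) := by
    intro G hG x hx
    have hc : ContinuousOn (fun s => G (x, s)) (Icc 0 L) :=
      hG.comp ((continuous_const.prodMk continuous_id).continuousOn) (fun s hs => ⟨hx, hs⟩)
    exact (hc.mono hIccIcc).aestronglyMeasurable measurableSet_uIoc
  have hL0' : ∀ t₀ ∈ Ioi (0:ℝ),
      HasDerivAt (fun t => ∫ s in (0:ℝ)..L, F t s) (∫ s in (0:ℝ)..L, Ft t₀ s) t₀ := by
    intro t₀ ht₀
    have hball : Metric.ball t₀ (t₀ / 2) ⊆ Icc (t₀ / 2) (t₀ + t₀ / 2) := by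
      rw [Real.ball_eq_Ioo]
      intro x hx
      constructor <;> [linarith [hx.1]; linarith [hx.2] ]
    have hKS : Icc (t₀ / 2) (t₀ + t₀ / 2) ×ˢ Icc (0:ℝ) L ⊆ Ici 0 ×ˢ Icc 0 L := by
      apply prod_mono_left
      intro x hx
      have : (0:ℝ) < t₀ / 2 := by linarith [mem_Ioi.1 ht₀]
      exact le_of_lt (lt_of_lt_of_le this hx.1)
    obtain ⟨C, hC⟩ := (isCompact_Icc.prod isCompact_Icc).exists_bound_of_continuousOn
      (hFtc.mono hKS)
    have key := intervalIntegral.hasDerivAt_integral_of_dominated_loc_of_deriv_le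
      (μ := volume) (F := F) (F' := Ft) (x₀ := t₀) (a := (0:ℝ)) (b := L)
      (bound := fun _ => C) (Metric.ball_mem_nhds t₀ (half_pos (mem_Ioi.1 ht₀)))
      ?meas ?int ?meas' ?bnd ?bint ?diff
    · exact key.2
    case meas =>
      filter_upwards [Ioi_mem_nhds (mem_Ioi.1 ht₀)] with x hx
      exact hmeas _ hFc x (le_of_lt hx)
    case int =>
      have hc : ContinuousOn (fun s => F t₀ s) (Icc 0 L) :=
        hFc.comp ((continuous_const.prodMk continuous_id).continuousOn)
          (fun s hs => ⟨le_of_lt (mem_Ioi.1 ht₀), hs⟩)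
      exact (hc.mono (uIcc_of_le hL').subset).intervalIntegrable
    case meas' => exact hmeas _ hFtc t₀ (le_of_lt (mem_Ioi.1 ht₀))
    case bnd =>
      refine Filter.Eventually.of_forall fun s hs x hx => ?_
      exact hC (x, s) ⟨hball hx, hIccIcc hs⟩
    case bint => exact intervalIntegrable_const
    case diff =>
      refine Filter.Eventually.of_forall fun s hs x hx => ?_
      have hx0 : 0 < x := by
        have := (hball hx).1
        have h0 : (0:ℝ) < t₀ / 2 := half_pos (mem_Ioi.1 ht₀)
        linarith
      exact hdiff s (hIccIcc hs) x hx0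
  have hL0c : ContinuousOn (fun t => ∫ s in (0:ℝ)..L, F t s) (Ici 0) := by
    intro t₀ ht₀
    obtain ⟨C, hC⟩ := (isCompact_Icc.prod isCompact_Icc).exists_bound_of_continuousOn
      (hFc.mono (prod_mono_left (Icc_subset_Ici_self : Icc (0:ℝ) (t₀+1) ⊆ Ici 0)))
    apply intervalIntegral.continuousWithinAt_of_dominated_interval (bound := fun _ => C)
    · filter_upwards [self_mem_nhdsWithin] with x hx
      exact hmeas _ hFc x hx
    · have h1 : ∀ᶠ x in nhdsWithin t₀ (Ici 0), x ∈ Icc (0:ℝ) (t₀ + 1) := by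
        filter_upwards [self_mem_nhdsWithin,
          mem_nhdsWithin_of_mem_nhds (Iio_mem_nhds (lt_add_one t₀))] with x h1 h2
        exact ⟨h1, le_of_lt h2⟩
      filter_upwards [h1] with x hx
      exact Filter.Eventually.of_forall fun s hs => hC (x, s) ⟨hx, hIccIcc hs⟩
    · exact intervalIntegrable_const
    · refine Filter.Eventually.of_forall fun s hs => ?_
      have hs' := hIccIcc hs
      have hcomp : ContinuousWithinAt ((fun p : ℝ × ℝ => F p.1 p.2) ∘ (fun x : ℝ => (x, s)))
          (Ici 0) t₀ :=
        ContinuousWithinAt.comp (hFc (t₀, s) ⟨ht₀, hs'⟩)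
          ((continuous_id.prodMk continuous_const).continuousWithinAt)
          (fun x hx => ⟨hx, hs'⟩)
      exact hcomp
  set G : ℝ → ℝ := fun t => (∫ s in (0:ℝ)..L, F t s) * Real.exp (k * t) with hGdef
  have hexp : ∀ x : ℝ, HasDerivAt (fun t => Real.exp (k * t)) (Real.exp (k * x) * (k * 1)) x :=
    fun x => ((hasDerivAt_id x).const_mul k).exp
  have hGd : ∀ x ∈ Ioi (0:ℝ), HasDerivAt G
      ((∫ s in (0:ℝ)..L, Ft x s) * Real.exp (k * x)
        + (∫ s in (0:ℝ)..L, F x s) * (Real.exp (k * x) * (k * 1))) x :=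
    fun x hx => (hL0' x hx).mul (hexp x)
  have hanti : AntitoneOn G (Ici 0) := by
    apply antitoneOn_of_deriv_nonpos (convex_Ici 0)
    · exact hL0c.mul (Real.continuous_exp.comp (continuous_const.mul continuous_id)).continuousOn
    · rw [interior_Ici]
      exact fun x hx => ((hGd x hx).differentiableAt).differentiableWithinAt
    · rw [interior_Ici]
      intro x hx
      rw [(hGd x hx).deriv]
      have h1 := hD x hx
      have h2 := Real.exp_pos (k * x)
      nlinarith [mul_nonpos_of_nonpos_of_nonneg h1 h2.le]
  intro t ht
  have h1 : G t ≤ G 0 := hanti (self_mem_Ici) ht ht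
  have h2 : G 0 = ∫ s in (0:ℝ)..L, F 0 s := by simp [hGdef]
  rw [h2] at h1
  have h3 : (∫ s in (0:ℝ)..L, F t s) = G t * Real.exp (-k * t) := by
    rw [hGdef]
    simp only
    rw [mul_assoc, ← Real.exp_add]
    ring_nf
    simp
  rw [h3]
  exact mul_le_mul_of_nonneg_right h1 (Real.exp_pos _).le


/-- Exponential-stability lemma in the Appendix supporting Proposition 1:
for the closed-loop cable dynamics
`τ ∂V/∂t = λ² ∂²V/∂s² − V − W + I`, `τ̃ ∂W/∂t = −W + b g(V)` with
`I = b g(V) + (1−β) V + β V̄ − λ² V̄''` and Neumann boundary conditions, if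
`b ≥ 0`, `τ, τ̃, λ > 0`, `k = 1/τ̃` and `β > (b+1)²/2 + b + kτ/2`, the Lyapunov
functional `𝓛₀(t) = ½ ∫₀ᴸ τ (V − V̄)² + τ̃ (W − b g(V̄))² ds` satisfies
`𝓛₀(t) ≤ 𝓛₀(0) exp(−k t)` for all `t ≥ 0`; in particular the equilibrium
`(V̄, b g(V̄))` of the closed-loop neural dynamics is exponentially stable. -/
theorem lyapunov_functional_exponential_decay
    (L lam tau tautil b beta k : ℝ)
    (hL : 0 < L) (hlam : 0 < lam) (htau : 0 < tau) (htautil : 0 < tautil)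
    (hb : 0 ≤ b) (hk : k = 1 / tautil)
    (hbeta : (b + 1) ^ 2 / 2 + b + k * tau / 2 < beta)
    (V W Vt Wt Vs Vss : ℝ → ℝ → ℝ)
    (Vbar Vbar' Vbar'' : ℝ → ℝ)
    -- the reference voltage is twice continuously differentiable with flat ends
    (hVbar : ∀ s ∈ Icc 0 L, HasDerivWithinAt Vbar (Vbar' s) (Icc 0 L) s)
    (hVbar' : ∀ s ∈ Icc 0 L, HasDerivWithinAt Vbar' (Vbar'' s) (Icc 0 L) s)
    (hVbar''cont : ContinuousOn Vbar'' (Icc 0 L))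
    (hVbar0 : Vbar' 0 = 0) (hVbarL : Vbar' L = 0)
    -- joint continuity of the solution and its partial derivatives
    (hVcont : ContinuousOn (fun p : ℝ × ℝ => V p.1 p.2) (Ici 0 ×ˢ Icc 0 L))
    (hWcont : ContinuousOn (fun p : ℝ × ℝ => W p.1 p.2) (Ici 0 ×ˢ Icc 0 L))
    (hVtcont : ContinuousOn (fun p : ℝ × ℝ => Vt p.1 p.2) (Ici 0 ×ˢ Icc 0 L))
    (hWtcont : ContinuousOn (fun p : ℝ × ℝ => Wt p.1 p.2) (Ici 0 ×ˢ Icc 0 L))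
    (hVscont : ContinuousOn (fun p : ℝ × ℝ => Vs p.1 p.2) (Ici 0 ×ˢ Icc 0 L))
    (hVsscont : ContinuousOn (fun p : ℝ × ℝ => Vss p.1 p.2) (Ici 0 ×ˢ Icc 0 L))
    -- partial derivatives
    (hVt : ∀ t ∈ Ici (0:ℝ), ∀ s ∈ Icc 0 L,
      HasDerivWithinAt (fun t' => V t' s) (Vt t s) (Ici 0) t)
    (hWt : ∀ t ∈ Ici (0:ℝ), ∀ s ∈ Icc 0 L,
      HasDerivWithinAt (fun t' => W t' s) (Wt t s) (Ici 0) t)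
    (hVs : ∀ t ∈ Ici (0:ℝ), ∀ s ∈ Icc 0 L,
      HasDerivWithinAt (fun s' => V t s') (Vs t s) (Icc 0 L) s)
    (hVss : ∀ t ∈ Ici (0:ℝ), ∀ s ∈ Icc 0 L,
      HasDerivWithinAt (fun s' => Vs t s') (Vss t s) (Icc 0 L) s)
    -- closed-loop cable dynamics with the reference tracking current control
    (hPDE_V : ∀ t ∈ Ici (0:ℝ), ∀ s ∈ Icc 0 L,
      tau * Vt t s = lam ^ 2 * Vss t s - V t s - W t s +
        (b * max (V t s) 0 + (1 - beta) * V t s + beta * Vbar s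
          - lam ^ 2 * Vbar'' s))
    (hPDE_W : ∀ t ∈ Ici (0:ℝ), ∀ s ∈ Icc 0 L,
      tautil * Wt t s = -W t s + b * max (V t s) 0)
    -- Neumann boundary conditions
    (hNeumann0 : ∀ t ∈ Ici (0:ℝ), Vs t 0 = 0)
    (hNeumannL : ∀ t ∈ Ici (0:ℝ), Vs t L = 0) :
    ∀ t ∈ Ici (0:ℝ),
      (1 / 2) * (∫ s in (0:ℝ)..L,
          (tau * (V t s - Vbar s) ^ 2 +
            tautil * (W t s - b * max (Vbar s) 0) ^ 2)) ≤
        ((1 / 2) * ∫ s in (0:ℝ)..L,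
          (tau * (V 0 s - Vbar s) ^ 2 +
            tautil * (W 0 s - b * max (Vbar s) 0) ^ 2)) * Real.exp (-k * t) := by
  have hktt : k * tautil = 1 := by rw [hk]; field_simp
  have hL' : (0:ℝ) ≤ L := hL.le
  -- continuity of the reference voltage and its derivative
  have cVbar : ContinuousOn Vbar (Icc 0 L) := fun s hs => (hVbar s hs).continuousWithinAt
  have cVbar' : ContinuousOn Vbar' (Icc 0 L) := fun s hs => (hVbar' s hs).continuousWithinAt
  have hsnd : ∀ (f : ℝ → ℝ), ContinuousOn f (Icc 0 L) →
      ContinuousOn (fun p : ℝ × ℝ => f p.2) (Ici 0 ×ˢ Icc 0 L) :=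
    fun f hf => hf.comp continuous_snd.continuousOn (fun p hp => hp.2)
  -- joint continuity of F and Ft
  have hFc : ContinuousOn (fun p : ℝ × ℝ =>
      tau * (V p.1 p.2 - Vbar p.2) ^ 2 +
        tautil * (W p.1 p.2 - b * max (Vbar p.2) 0) ^ 2) (Ici 0 ×ˢ Icc 0 L) :=
    (continuousOn_const.mul ((hVcont.sub (hsnd _ cVbar)).pow 2)).add
      (continuousOn_const.mul
        ((hWcont.sub (continuousOn_const.mul ((hsnd _ cVbar).sup continuousOn_const))).pow 2))
  have hFtc : ContinuousOn (fun p : ℝ × ℝ =>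
      2 * tau * (V p.1 p.2 - Vbar p.2) * Vt p.1 p.2 +
        2 * tautil * (W p.1 p.2 - b * max (Vbar p.2) 0) * Wt p.1 p.2) (Ici 0 ×ˢ Icc 0 L) :=
    (((continuousOn_const.mul (hVcont.sub (hsnd _ cVbar))).mul hVtcont)).add
      (((continuousOn_const.mul
        (hWcont.sub (continuousOn_const.mul ((hsnd _ cVbar).sup continuousOn_const)))).mul
          hWtcont))
  -- time differentiability of the integrand
  have hdiff : ∀ s ∈ Icc (0:ℝ) L, ∀ t ∈ Ioi (0:ℝ),
      HasDerivAt (fun t' => tau * (V t' s - Vbar s) ^ 2 +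
          tautil * (W t' s - b * max (Vbar s) 0) ^ 2)
        (2 * tau * (V t s - Vbar s) * Vt t s +
          2 * tautil * (W t s - b * max (Vbar s) 0) * Wt t s) t := by
    intro s hs t ht
    have ht' : (0:ℝ) ≤ t := le_of_lt ht
    have hv : HasDerivAt (fun t' => V t' s) (Vt t s) t :=
      (hVt t ht' s hs).hasDerivAt (Ici_mem_nhds ht)
    have hw : HasDerivAt (fun t' => W t' s) (Wt t s) t :=
      (hWt t ht' s hs).hasDerivAt (Ici_mem_nhds ht)
    have h := (((hv.sub_const (Vbar s)).pow 2).const_mul tau).add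
      (((hw.sub_const (b * max (Vbar s) 0)).pow 2).const_mul tautil)
    refine h.congr_deriv ?_
    norm_num
    ring
  -- the key differential inequality
  have hD : ∀ t ∈ Ioi (0:ℝ),
      (∫ s in (0:ℝ)..L, (2 * tau * (V t s - Vbar s) * Vt t s +
          2 * tautil * (W t s - b * max (Vbar s) 0) * Wt t s)) +
        k * (∫ s in (0:ℝ)..L, (tau * (V t s - Vbar s) ^ 2 +
          tautil * (W t s - b * max (Vbar s) 0) ^ 2)) ≤ 0 := by
    intro t ht
    have ht' : t ∈ Ici (0:ℝ) := (le_of_lt ht : (0:ℝ) ≤ t)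
    -- continuity of slices at time t
    have hslice : ∀ (G : ℝ → ℝ → ℝ),
        ContinuousOn (fun p : ℝ × ℝ => G p.1 p.2) (Ici 0 ×ˢ Icc 0 L) →
        ContinuousOn (fun s => G t s) (Icc 0 L) := fun G hG =>
      hG.comp ((continuous_const.prodMk continuous_id).continuousOn) (fun s hs => ⟨ht', hs⟩)
    have cV := hslice V hVcont
    have cW := hslice W hWcont
    have cVt := hslice Vt hVtcont
    have cWt := hslice Wt hWtcont
    have cVs := hslice Vs hVscont
    have cVss := hslice Vss hVsscont
    have cA : ContinuousOn (fun s => V t s - Vbar s) (Icc 0 L) := cV.sub cVbar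
    have cC : ContinuousOn (fun s => W t s - b * max (Vbar s) 0) (Icc 0 L) :=
      cW.sub (continuousOn_const.mul (cVbar.sup continuousOn_const))
    have cES : ContinuousOn (fun s => Vs t s - Vbar' s) (Icc 0 L) := cVs.sub cVbar'
    have cESS : ContinuousOn (fun s => Vss t s - Vbar'' s) (Icc 0 L) := cVss.sub hVbar''cont
    have hiint : ∀ {f : ℝ → ℝ}, ContinuousOn f (Icc 0 L) →
        IntervalIntegrable f volume 0 L :=
      fun hf => (hf.mono (uIcc_of_le hL').subset).intervalIntegrable
    -- integration by parts via the fundamental theorem of calculus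
    have hIBP : (∫ s in (0:ℝ)..L, ((Vs t s - Vbar' s) ^ 2 +
        (V t s - Vbar s) * (Vss t s - Vbar'' s))) = 0 := by
      have hderiv : ∀ x ∈ Ioo (0:ℝ) L,
          HasDerivWithinAt (fun s => (V t s - Vbar s) * (Vs t s - Vbar' s))
            ((Vs t x - Vbar' x) ^ 2 + (V t x - Vbar x) * (Vss t x - Vbar'' x)) (Ioi x) x := by
        intro x hx
        have hx' : x ∈ Icc (0:ℝ) L := Ioo_subset_Icc_self hx
        have h1 : HasDerivWithinAt (fun s => V t s - Vbar s) (Vs t x - Vbar' x) (Icc 0 L) x :=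
          (hVs t ht' x hx').sub (hVbar x hx')
        have h2 : HasDerivWithinAt (fun s => Vs t s - Vbar' s) (Vss t x - Vbar'' x)
            (Icc 0 L) x := (hVss t ht' x hx').sub (hVbar' x hx')
        have h3 := ((h1.mul h2).hasDerivAt (Icc_mem_nhds hx.1 hx.2)).hasDerivWithinAt
          (s := Ioi x)
        refine h3.congr_deriv ?_
        ring
      have heq := intervalIntegral.integral_eq_sub_of_hasDeriv_right_of_le
        (f := fun s => (V t s - Vbar s) * (Vs t s - Vbar' s)) hL'
        (cA.mul cES) hderiv (hiint ((cES.pow 2).add (cA.mul cESS)))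
      rw [heq, hNeumann0 t ht', hNeumannL t ht', hVbar0, hVbarL]
      ring
    -- pointwise differential inequality
    have hpt : ∀ s ∈ Icc (0:ℝ) L,
        2 * tau * (V t s - Vbar s) * Vt t s +
          2 * tautil * (W t s - b * max (Vbar s) 0) * Wt t s +
          k * (tau * (V t s - Vbar s) ^ 2 + tautil * (W t s - b * max (Vbar s) 0) ^ 2) -
          2 * lam ^ 2 * ((V t s - Vbar s) * (Vss t s - Vbar'' s)) ≤ 0 := by
      intro s hs
      have hA := hPDE_V t ht' s hs
      have hB := hPDE_W t ht' s hs
      have habs : |max (V t s) 0 - max (Vbar s) 0| ≤ |V t s - Vbar s| :=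
        abs_max_sub_max_le_abs _ _ _
      have hd2 : (max (V t s) 0 - max (Vbar s) 0) ^ 2 ≤ (V t s - Vbar s) ^ 2 := by
        rw [← sq_abs, ← sq_abs (V t s - Vbar s)]
        exact pow_le_pow_left₀ (abs_nonneg _) habs 2
      have haux := lyap_aux_ineq b beta k tau tautil (V t s - Vbar s)
        (W t s - b * max (Vbar s) 0) (max (V t s) 0 - max (Vbar s) 0) hb hktt hbeta hd2
      have hA2 : 2 * (V t s - Vbar s) * (tau * Vt t s) =
          2 * (V t s - Vbar s) * (lam ^ 2 * (Vss t s - Vbar'' s)) +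
          2 * (V t s - Vbar s) * (-(beta * (V t s - Vbar s)) -
            (W t s - b * max (Vbar s) 0) + b * (max (V t s) 0 - max (Vbar s) 0)) := by
        linear_combination (2 * (V t s - Vbar s)) * hA
      have hB2 : 2 * (W t s - b * max (Vbar s) 0) * (tautil * Wt t s) =
          2 * (W t s - b * max (Vbar s) 0) * (-(W t s - b * max (Vbar s) 0) +
            b * (max (V t s) 0 - max (Vbar s) 0)) := by
        linear_combination (2 * (W t s - b * max (Vbar s) 0)) * hB
      nlinarith [haux, hA2, hB2]
    -- integrability of the pieces
    have cF : ContinuousOn (fun s => tau * (V t s - Vbar s) ^ 2 +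
        tautil * (W t s - b * max (Vbar s) 0) ^ 2) (Icc 0 L) :=
      (continuousOn_const.mul (cA.pow 2)).add (continuousOn_const.mul (cC.pow 2))
    have cFt : ContinuousOn (fun s => 2 * tau * (V t s - Vbar s) * Vt t s +
        2 * tautil * (W t s - b * max (Vbar s) 0) * Wt t s) (Icc 0 L) :=
      ((continuousOn_const.mul cA).mul cVt).add ((continuousOn_const.mul cC).mul cWt)
    have cP : ContinuousOn (fun s =>
        2 * tau * (V t s - Vbar s) * Vt t s +
          2 * tautil * (W t s - b * max (Vbar s) 0) * Wt t s +
          k * (tau * (V t s - Vbar s) ^ 2 + tautil * (W t s - b * max (Vbar s) 0) ^ 2) -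
          2 * lam ^ 2 * ((V t s - Vbar s) * (Vss t s - Vbar'' s))) (Icc 0 L) :=
      ((cFt.add (continuousOn_const.mul cF))).sub (continuousOn_const.mul (cA.mul cESS))
    have iF := hiint cF
    have iFt := hiint cFt
    have iP := hiint cP
    have ies2 : IntervalIntegrable (fun s => (Vs t s - Vbar' s) ^ 2) volume 0 L := hiint (cES.pow 2)
    have iIBP : IntervalIntegrable (fun s => (Vs t s - Vbar' s) ^ 2 +
        (V t s - Vbar s) * (Vss t s - Vbar'' s)) volume 0 L := hiint ((cES.pow 2).add (cA.mul cESS))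
    -- split the integral
    have hsplit : (∫ s in (0:ℝ)..L, (2 * tau * (V t s - Vbar s) * Vt t s +
          2 * tautil * (W t s - b * max (Vbar s) 0) * Wt t s +
          k * (tau * (V t s - Vbar s) ^ 2 + tautil * (W t s - b * max (Vbar s) 0) ^ 2))) =
        (∫ s in (0:ℝ)..L, (2 * tau * (V t s - Vbar s) * Vt t s +
          2 * tautil * (W t s - b * max (Vbar s) 0) * Wt t s +
          k * (tau * (V t s - Vbar s) ^ 2 + tautil * (W t s - b * max (Vbar s) 0) ^ 2) -
          2 * lam ^ 2 * ((V t s - Vbar s) * (Vss t s - Vbar'' s))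
          - 2 * lam ^ 2 * (Vs t s - Vbar' s) ^ 2)) +
        2 * lam ^ 2 * (∫ s in (0:ℝ)..L, ((Vs t s - Vbar' s) ^ 2 +
          (V t s - Vbar s) * (Vss t s - Vbar'' s))) := by
      rw [← intervalIntegral.integral_const_mul,
        ← intervalIntegral.integral_add (iP.sub (ies2.const_mul (2 * lam ^ 2)))
          (iIBP.const_mul (2 * lam ^ 2))]
      apply intervalIntegral.integral_congr
      intro s _
      ring
    have hPle : (∫ s in (0:ℝ)..L, (2 * tau * (V t s - Vbar s) * Vt t s +
          2 * tautil * (W t s - b * max (Vbar s) 0) * Wt t s +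
          k * (tau * (V t s - Vbar s) ^ 2 + tautil * (W t s - b * max (Vbar s) 0) ^ 2) -
          2 * lam ^ 2 * ((V t s - Vbar s) * (Vss t s - Vbar'' s))
          - 2 * lam ^ 2 * (Vs t s - Vbar' s) ^ 2)) ≤ 0 := by
      have hmono := intervalIntegral.integral_mono_on (μ := volume) (g := fun _ => (0:ℝ)) hL'
        (iP.sub (ies2.const_mul (2 * lam ^ 2))) intervalIntegrable_const
        (fun s hs => by
          have h1 := hpt s hs
          have h2 : 0 ≤ 2 * lam ^ 2 * (Vs t s - Vbar' s) ^ 2 := by positivity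
          show _ ≤ (0:ℝ)
          linarith)
      simpa using hmono
    have hcomb : (∫ s in (0:ℝ)..L, (2 * tau * (V t s - Vbar s) * Vt t s +
          2 * tautil * (W t s - b * max (Vbar s) 0) * Wt t s)) +
        k * (∫ s in (0:ℝ)..L, (tau * (V t s - Vbar s) ^ 2 +
          tautil * (W t s - b * max (Vbar s) 0) ^ 2)) =
        (∫ s in (0:ℝ)..L, (2 * tau * (V t s - Vbar s) * Vt t s +
          2 * tautil * (W t s - b * max (Vbar s) 0) * Wt t s +
          k * (tau * (V t s - Vbar s) ^ 2 + tautil * (W t s - b * max (Vbar s) 0) ^ 2))) := by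
      rw [intervalIntegral.integral_add iFt (iF.const_mul k),
        intervalIntegral.integral_const_mul]
    rw [hcomb, hsplit, hIBP, mul_zero, add_zero]
    exact hPle
  -- apply the abstract decay lemma
  have hdec := lyap_decay_aux k L hL
    (fun t s => tau * (V t s - Vbar s) ^ 2 + tautil * (W t s - b * max (Vbar s) 0) ^ 2)
    (fun t s => 2 * tau * (V t s - Vbar s) * Vt t s +
      2 * tautil * (W t s - b * max (Vbar s) 0) * Wt t s)
    hFc hFtc hdiff hD
  intro t ht
  have h := hdec t ht
  have h' : (∫ s in (0:ℝ)..L, (tau * (V t s - Vbar s) ^ 2 +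
      tautil * (W t s - b * max (Vbar s) 0) ^ 2)) ≤
      (∫ s in (0:ℝ)..L, (tau * (V 0 s - Vbar s) ^ 2 +
        tautil * (W 0 s - b * max (Vbar s) 0) ^ 2)) * Real.exp (-k * t) := h
  linarith
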